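/- For a single-layer network with componentwise monotone non-decreasing activation f, the maximum sensitivity ε(x,δ) = sup{‖f(W(x+Δx)+θ) − f(Wx+θ)‖_∞ : ‖Δx‖_∞ ≤ δ} satisfies ε(x,δ) ≤ max_i max{|f(β_{i,max}) − f((Wx)_i+θ_i)|, |f(β_{i,min}) − f((Wx)_i+θ_i)|}, where β_{i,max/min} = (Wx)_i + θ_i ± δ‖W_i‖₁. -/
import Mathlib


theorem single_layer_max_sensitivity_bound {m n : ℕ} (hm : 0 < m)
    (W : Matrix (Fin m) (Fin n) ℝ) (θ : Fin m → ℝ) (x : Fin n → ℝ)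
    (δ : ℝ) (hδ : 0 ≤ δ) (f : ℝ → ℝ) (hf : Monotone f) :
    sSup {ε | ∃ Δx : Fin n → ℝ, ‖Δx‖ ≤ δ ∧
        ε = ‖(fun i => f (W.mulVec (x + Δx) i + θ i)) -
             (fun i => f (W.mulVec x i + θ i))‖} ≤
      Finset.univ.sup' (Finset.univ_nonempty_iff.mpr ⟨⟨0, hm⟩⟩) (fun i =>
        max |f (W.mulVec x i + θ i + δ * ∑ j, |W i j|) - f (W.mulVec x i + θ i)|
            |f (W.mulVec x i + θ i - δ * ∑ j, |W i j|) - f (W.mulVec x i + θ i)|) := by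
  set hne := Finset.univ_nonempty_iff.mpr (⟨⟨0, hm⟩⟩ : Nonempty (Fin m))
  set B := Finset.univ.sup' hne (fun i =>
        max |f (W.mulVec x i + θ i + δ * ∑ j, |W i j|) - f (W.mulVec x i + θ i)|
            |f (W.mulVec x i + θ i - δ * ∑ j, |W i j|) - f (W.mulVec x i + θ i)|) with hB
  have hB0 : 0 ≤ B := by
    refine le_trans ?_ (Finset.le_sup' _ (Finset.mem_univ ⟨0, hm⟩))
    exact le_max_of_le_left (abs_nonneg _)
  apply Real.sSup_le _ hB0
  rintro ε ⟨Δx, hΔx, rfl⟩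
  rw [pi_norm_le_iff_of_nonneg hB0]
  intro i
  have key : ∀ j, |Δx j| ≤ δ := fun j => le_trans (norm_le_pi_norm Δx j) hΔx
  have hsum : |∑ j, W i j * Δx j| ≤ δ * ∑ j, |W i j| := by
    calc |∑ j, W i j * Δx j| ≤ ∑ j, |W i j * Δx j| := Finset.abs_sum_le_sum_abs _ _
      _ ≤ ∑ j, |W i j| * δ := by
          refine Finset.sum_le_sum fun j _ => ?_
          rw [abs_mul]
          exact mul_le_mul_of_nonneg_left (key j) (abs_nonneg _)
      _ = δ * ∑ j, |W i j| := by rw [Finset.mul_sum]; simp [mul_comm]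
  have hmv : W.mulVec (x + Δx) i = W.mulVec x i + ∑ j, W i j * Δx j := by
    simp [Matrix.mulVec, dotProduct, mul_add, Finset.sum_add_distrib]
  set c := W.mulVec x i + θ i
  set p := W.mulVec (x + Δx) i + θ i with hp
  have hple : p ≤ c + δ * ∑ j, |W i j| := by
    rw [hp, hmv]
    have := (abs_le.mp hsum).2
    simp only [c]; linarith
  have hpge : c - δ * ∑ j, |W i j| ≤ p := by
    rw [hp, hmv]
    have := (abs_le.mp hsum).1
    simp only [c]; linarith
  have h1 : f p - f c ≤ |f (c + δ * ∑ j, |W i j|) - f c| :=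
    le_trans (by linarith [hf hple]) (le_abs_self _)
  have h2 : f c - f p ≤ |f (c - δ * ∑ j, |W i j|) - f c| := by
    rw [abs_sub_comm]
    exact le_trans (by linarith [hf hpge]) (le_abs_self _)
  have : |f p - f c| ≤ max |f (c + δ * ∑ j, |W i j|) - f c| |f (c - δ * ∑ j, |W i j|) - f c| := by
    rw [abs_sub_le_iff]
    constructor
    · exact le_trans h1 (le_max_left _ _)
    · exact le_trans h2 (le_max_right _ _)
  calc ‖((fun i => f (W.mulVec (x + Δx) i + θ i)) -
             (fun i => f (W.mulVec x i + θ i))) i‖ = |f p - f c| := by simp [c, p]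
    _ ≤ _ := this
    _ ≤ B := by
        rw [hB]
        exact Finset.le_sup' (fun i => max |f (W.mulVec x i + θ i + δ * ∑ j, |W i j|) - f (W.mulVec x i + θ i)| |f (W.mulVec x i + θ i - δ * ∑ j, |W i j|) - f (W.mulVec x i + θ i)|) (Finset.mem_univ i)
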